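/- Let I ⊆ 𝔽[x₁,…,x_d] be an ideal of colength n, let w ∈ ℝ₊^d be generic (inducing a total order on monomials by u ↦ w·u), and let λ be the initial staircase of I under w. Then for every basic set μ ≠ λ of I contained in V_n^d, w·∑λ < w·∑μ; in particular ∑λ is the unique minimizer of w over the basis polytope B(I) = conv{∑μ : μ basic, μ ⊂ V_n^d}. -/

import Mathlib

open MvPolynomial

/-- The weight of an exponent vector `u` under `w`. -/
noncomputable def wt {d : ℕ} (w : Fin d → ℝ) (u : Fin d →₀ ℕ) : ℝ := ∑ i, w i * u i

/-- The dot product on `ℝ^d`. -/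
noncomputable def rdot {d : ℕ} (w x : Fin d → ℝ) : ℝ := ∑ i, w i * x i

/-- A staircase of exponent vectors: a downward-closed finite set. -/
def IsStaircaseF {d : ℕ} (l : Finset (Fin d →₀ ℕ)) : Prop :=
  ∀ u v : Fin d →₀ ℕ, v ∈ l → u ≤ v → u ∈ l

/-- Membership in `V_n^d`, the union of all `n`-staircases. -/
def memV {d : ℕ} (n : ℕ) (v : Fin d →₀ ℕ) : Prop := ∏ i, (v i + 1) ≤ n

/-- The monomial ideal of a staircase `l`. -/
noncomputable def staircaseIdeal {d : ℕ} (F : Type*) [Field F] (l : Finset (Fin d →₀ ℕ)) :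
    Ideal (MvPolynomial (Fin d) F) :=
  Ideal.span {p | ∃ u : Fin d →₀ ℕ, u ∉ l ∧ p = monomial u (1 : F)}

/-- The initial ideal of `I` under a weight vector `w`: generated by the monomials of
`w`-maximal weight of the nonzero elements of `I`. -/
noncomputable def initialIdealW {d : ℕ} {F : Type*} [Field F] (w : Fin d → ℝ)
    (I : Ideal (MvPolynomial (Fin d) F)) : Ideal (MvPolynomial (Fin d) F) :=
  Ideal.span {p | ∃ f ∈ I, f ≠ 0 ∧ ∃ u ∈ f.support,
    (∀ v ∈ f.support, wt w v ≤ wt w u) ∧ p = monomial u (1 : F)}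

/-- A finite set `s` of exponents is basic for `I`. -/
def IsBasic {d : ℕ} {F : Type*} [Field F] (I : Ideal (MvPolynomial (Fin d) F))
    (s : Finset (Fin d →₀ ℕ)) : Prop :=
  ∀ f ∈ Submodule.span F {p | ∃ v ∈ s, p = monomial v (1 : F)}, f ∈ I → f = 0

/-- The coordinatewise sum `∑ λ` of a finite set of exponent vectors, as a real vector. -/
noncomputable def sumVec {d : ℕ} (l : Finset (Fin d →₀ ℕ)) : Fin d → ℝ :=
  fun i => ∑ v ∈ l, (v i : ℝ)

lemma wt_add {d : ℕ} (w : Fin d → ℝ) (u v : Fin d →₀ ℕ) :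
    wt w (u + v) = wt w u + wt w v := by
  simp [wt, mul_add, Finset.sum_add_distrib]
lemma wt_single {d : ℕ} (w : Fin d → ℝ) (i : Fin d) :
    wt w (Finsupp.single i 1) = w i := by
  simp [wt, Finsupp.single_apply]
lemma wpos {d : ℕ} {w : Fin d → ℝ} (hw : ∀ i, 0 ≤ w i)
    (hgen : ∀ u v : Fin d →₀ ℕ, wt w u = wt w v → u = v) : ∀ i, 0 < w i := by
  intro i
  rcases lt_or_eq_of_le (hw i) with h | h
  · exact h
  · exfalso
    have h0 : wt w (Finsupp.single i 1) = wt w 0 := by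
      rw [wt_single, ← h]; simp [wt]
    have := hgen _ _ h0
    simp at this
lemma coord_le_wt {d : ℕ} {w : Fin d → ℝ} (hw : ∀ i, 0 ≤ w i) (v : Fin d →₀ ℕ) (i : Fin d) :
    w i * v i ≤ wt w v := by
  exact Finset.single_le_sum (f := fun j => w j * v j)
    (fun j _ => mul_nonneg (hw j) (Nat.cast_nonneg _)) (Finset.mem_univ i)
lemma finite_wt_lt {d : ℕ} {w : Fin d → ℝ} (hw : ∀ i, 0 < w i) (c : ℝ) :
    {v : Fin d →₀ ℕ | wt w v < c}.Finite := by
  set B : Fin d →₀ ℕ := Finsupp.equivFunOnFinite.symm (fun i => Nat.ceil (c / w i)) with hB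
  apply Set.Finite.subset (Set.finite_Iic B)
  intro v hv
  simp only [Set.mem_Iic]
  rw [Finsupp.le_iff]
  intro i _
  have h1 : w i * v i ≤ wt w v := coord_le_wt (fun j => (hw j).le) v i
  have h2 : (v i : ℝ) ≤ c / w i := by
    rw [le_div_iff₀ (hw i)]
    calc (v i : ℝ) * w i = w i * v i := mul_comm _ _
    _ ≤ wt w v := h1
    _ ≤ c := (hv : wt w v < c).le
  have h3 : (v i : ℝ) ≤ Nat.ceil (c / w i) := h2.trans (Nat.le_ceil _)
  have : v i ≤ Nat.ceil (c / w i) := by exact_mod_cast h3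
  simpa [hB] using this
lemma staircase_gens {d : ℕ} (F : Type*) [Field F] (l : Finset (Fin d →₀ ℕ)) :
    {p : MvPolynomial (Fin d) F | ∃ u : Fin d →₀ ℕ, u ∉ l ∧ p = monomial u (1 : F)}
      = (fun s => monomial s (1 : F)) '' {u | u ∉ l} := by
  ext p
  constructor
  · rintro ⟨u, hu, rfl⟩; exact ⟨u, hu, rfl⟩
  · rintro ⟨u, hu, rfl⟩; exact ⟨u, hu, rfl⟩
lemma initial_gens {d : ℕ} {F : Type*} [Field F] (w : Fin d → ℝ)
    (I : Ideal (MvPolynomial (Fin d) F)) :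
    {p : MvPolynomial (Fin d) F | ∃ f ∈ I, f ≠ 0 ∧ ∃ u ∈ f.support,
      (∀ v ∈ f.support, wt w v ≤ wt w u) ∧ p = monomial u (1 : F)}
      = (fun s => monomial s (1 : F)) ''
        {u | ∃ f ∈ I, f ≠ 0 ∧ u ∈ f.support ∧ ∀ v ∈ f.support, wt w v ≤ wt w u} := by
  ext p
  constructor
  · rintro ⟨f, hf, hf0, u, hu, hmax, rfl⟩; exact ⟨u, ⟨f, hf, hf0, hu, hmax⟩, rfl⟩
  · rintro ⟨u, ⟨f, hf, hf0, hu, hmax⟩, rfl⟩; exact ⟨f, hf, hf0, u, hu, hmax, rfl⟩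
lemma support_subset_of_mem_span {d : ℕ} {F : Type*} [Field F] {s : Finset (Fin d →₀ ℕ)}
    {f : MvPolynomial (Fin d) F}
    (hf : f ∈ Submodule.span F {p : MvPolynomial (Fin d) F | ∃ v ∈ s, p = monomial v (1 : F)}) :
    ∀ v ∈ f.support, v ∈ s := by
  induction hf using Submodule.span_induction with
  | mem p hp =>
    obtain ⟨v, hv, rfl⟩ := hp
    intro v' hv'
    rcases Finset.mem_singleton.mp (support_monomial_subset hv') with rfl
    exact hv
  | zero => simp
  | add p q _ _ hp hq =>
    intro v hv
    rcases Finset.mem_union.mp (support_add hv) with h | h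
    · exact hp v h
    · exact hq v h
  | smul c p _ hp =>
    intro v hv
    exact hp v (Finsupp.support_smul hv)
/-- Leading-term extraction: for `u ∉ l` produce `g ∈ I` with `coeff u g = 1` and all other
support of weight `< wt w u`. -/
lemma extract_leading {d : ℕ} {F : Type*} [Field F] {I : Ideal (MvPolynomial (Fin d) F)}
    {w : Fin d → ℝ} (hgen : ∀ u v : Fin d →₀ ℕ, wt w u = wt w v → u = v)
    {l : Finset (Fin d →₀ ℕ)}
    (hinit : staircaseIdeal F l = initialIdealW w I)
    {u : Fin d →₀ ℕ} (hu : u ∉ l) :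
    ∃ g ∈ I, coeff u g = 1 ∧ ∀ v ∈ g.support, v = u ∨ wt w v < wt w u := by
  have h1 : (monomial u (1 : F)) ∈ staircaseIdeal F l :=
    Ideal.subset_span ⟨u, hu, rfl⟩
  rw [hinit] at h1
  rw [initialIdealW, initial_gens] at h1
  have h2 := mem_ideal_span_monomial_image.mp h1 u (by simp [mem_support_iff])
  obtain ⟨u', ⟨f, hfI, hf0, hu'supp, hmax⟩, hle⟩ := h2
  set c : F := coeff u' f with hc
  have hc0 : c ≠ 0 := mem_support_iff.mp hu'supp
  refine ⟨monomial (u - u') c⁻¹ * f, I.mul_mem_left _ hfI, ?_, ?_⟩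
  · have e : (u - u') + u' = u := tsub_add_cancel_of_le hle
    have h3 : coeff ((u - u') + u') (monomial (u - u') c⁻¹ * f) = c⁻¹ * coeff u' f :=
      coeff_monomial_mul _ _ _ _
    rw [e] at h3
    rw [h3]
    exact inv_mul_cancel₀ hc0
  · intro v hv
    have hvc : coeff v (monomial (u - u') c⁻¹ * f) ≠ 0 := mem_support_iff.mp hv
    rw [coeff_monomial_mul'] at hvc
    by_cases hle2 : u - u' ≤ v
    · simp only [hle2, if_true] at hvc
      have hvf : (v - (u - u')) ∈ f.support := by
        rw [mem_support_iff]
        intro h0; rw [h0, mul_zero] at hvc; exact hvc rfl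
      have hwle : wt w v ≤ wt w u := by
        have e1 : v = (u - u') + (v - (u - u')) := by
          rw [add_comm]; exact (tsub_add_cancel_of_le hle2).symm
        have e2 : u = (u - u') + u' := (tsub_add_cancel_of_le hle).symm
        calc wt w v = wt w (u - u') + wt w (v - (u - u')) := by rw [← wt_add, ← e1]
        _ ≤ wt w (u - u') + wt w u' := by
            have := hmax _ hvf; linarith
        _ = wt w u := by rw [← wt_add, ← e2]
      rcases eq_or_lt_of_le hwle with heq | hlt
      · exact Or.inl (hgen v u heq)
      · exact Or.inr hlt
    · simp [hle2] at hvc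
lemma normal_form {d : ℕ} {F : Type*} [Field F] {I : Ideal (MvPolynomial (Fin d) F)}
    {w : Fin d → ℝ} (hw : ∀ i, 0 < w i)
    (hgen : ∀ u v : Fin d →₀ ℕ, wt w u = wt w v → u = v)
    {l : Finset (Fin d →₀ ℕ)}
    (hinit : staircaseIdeal F l = initialIdealW w I) :
    ∀ u : Fin d →₀ ℕ, ∃ r : MvPolynomial (Fin d) F,
      (∀ v ∈ r.support, v ∈ l) ∧ (∀ v ∈ r.support, v = u ∨ wt w v < wt w u) ∧
      monomial u (1 : F) - r ∈ I := by
  classical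
  have key : ∀ k : ℕ, ∀ u : Fin d →₀ ℕ,
      ((finite_wt_lt hw (wt w u)).toFinset.card < k) →
      ∃ r : MvPolynomial (Fin d) F,
        (∀ v ∈ r.support, v ∈ l) ∧ (∀ v ∈ r.support, v = u ∨ wt w v < wt w u) ∧
        monomial u (1 : F) - r ∈ I := by
    intro k
    induction k with
    | zero => intro u h; omega
    | succ k ih =>
      intro u hk
      by_cases hu : u ∈ l
      · refine ⟨monomial u 1, ?_, ?_, by simp⟩
        · intro v hv
          rcases Finset.mem_singleton.mp (support_monomial_subset hv) with rfl
          exact hu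
        · intro v hv
          rcases Finset.mem_singleton.mp (support_monomial_subset hv) with rfl
          exact Or.inl rfl
      · obtain ⟨g, hgI, hg1, hgsup⟩ := extract_leading hgen hinit hu
        set h : MvPolynomial (Fin d) F := monomial u (1 : F) - g with hh
        have hsupp : ∀ v ∈ h.support, wt w v < wt w u := by
          intro v hv
          have hvc : coeff v h ≠ 0 := mem_support_iff.mp hv
          by_cases hvu : v = u
          · exfalso; apply hvc; rw [hvu, hh]; simp [hg1]
          · have hvg : v ∈ g.support := by
              rw [mem_support_iff]
              intro h0
              apply hvc
              rw [hh]
              simp [coeff_monomial, Ne.symm hvu, h0, coeff_sub]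
            rcases hgsup v hvg with h1 | h1
            · exact absurd h1 hvu
            · exact h1
        have hrec : ∀ v : Fin d →₀ ℕ, ∃ r : MvPolynomial (Fin d) F, v ∈ h.support →
            ((∀ v' ∈ r.support, v' ∈ l) ∧ (∀ v' ∈ r.support, v' = v ∨ wt w v' < wt w v) ∧
             monomial v (1 : F) - r ∈ I) := by
          intro v
          by_cases hv : v ∈ h.support
          · have hlt : wt w v < wt w u := hsupp v hv
            have hcard : (finite_wt_lt hw (wt w v)).toFinset.card < k := by
              have hss : (finite_wt_lt hw (wt w v)).toFinset ⊂
                  (finite_wt_lt hw (wt w u)).toFinset := by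
                constructor
                · intro x hx
                  simp only [Set.Finite.mem_toFinset, Set.mem_setOf_eq] at *
                  exact lt_trans hx hlt
                · intro hsub
                  have h2 : v ∈ (finite_wt_lt hw (wt w v)).toFinset := by
                    apply hsub
                    simp only [Set.Finite.mem_toFinset, Set.mem_setOf_eq]
                    exact hlt
                  simp only [Set.Finite.mem_toFinset, Set.mem_setOf_eq] at h2
                  exact lt_irrefl _ h2
              have := Finset.card_lt_card hss
              omega
            obtain ⟨r, h1, h2, h3⟩ := ih v hcard
            exact ⟨r, fun _ => ⟨h1, h2, h3⟩⟩
          · exact ⟨0, fun hv' => absurd hv' hv⟩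
        choose ρ hρ using hrec
        refine ⟨∑ v ∈ h.support, coeff v h • ρ v, ?_, ?_, ?_⟩
        · intro v' hv'
          obtain ⟨v, hv, hv'2⟩ := Finset.mem_biUnion.mp (MvPolynomial.support_sum hv')
          exact (hρ v hv).1 v' (Finsupp.support_smul hv'2)
        · intro v' hv'
          obtain ⟨v, hv, hv'2⟩ := Finset.mem_biUnion.mp (MvPolynomial.support_sum hv')
          have h2 := (hρ v hv).2.1 v' (Finsupp.support_smul hv'2)
          refine Or.inr ?_
          rcases h2 with h2 | h2
          · rw [h2]; exact hsupp v hv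
          · exact lt_trans h2 (hsupp v hv)
        · have hsum : h = ∑ v ∈ h.support, coeff v h • monomial v (1 : F) := by
            conv_lhs => rw [as_sum h]
            apply Finset.sum_congr rfl
            intro v _
            rw [smul_monomial, smul_eq_mul, mul_one]
          have e : monomial u (1 : F) - ∑ v ∈ h.support, coeff v h • ρ v
              = g + ∑ v ∈ h.support, coeff v h • (monomial v (1 : F) - ρ v) := by
            simp only [smul_sub, Finset.sum_sub_distrib, ← hsum]
            rw [hh]; ring
          rw [e]
          refine I.add_mem hgI (Submodule.sum_mem _ fun v hv => ?_)
          rw [smul_eq_C_mul]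
          exact I.mul_mem_left _ (hρ v hv).2.2
  intro u
  exact key ((finite_wt_lt hw (wt w u)).toFinset.card + 1) u (by omega)
lemma sum_wt_lt {d n : ℕ} {F : Type*} [Field F] {I : Ideal (MvPolynomial (Fin d) F)}
    {w : Fin d → ℝ} (hw : ∀ i, 0 < w i)
    (hgen : ∀ u v : Fin d →₀ ℕ, wt w u = wt w v → u = v)
    {l : Finset (Fin d →₀ ℕ)} (hcard : l.card = n)
    (hinit : staircaseIdeal F l = initialIdealW w I)
    {μ : Finset (Fin d →₀ ℕ)} (hμcard : μ.card = n) (hbasic : IsBasic I μ) (hne : μ ≠ l) :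
    ∑ v ∈ l, wt w v < ∑ u ∈ μ, wt w u := by
  classical
  obtain ⟨ρ, hρ⟩ := Classical.axiomOfChoice (normal_form hw hgen hinit)
  have hρ1 : ∀ u, ∀ v ∈ (ρ u).support, v ∈ l := fun u => (hρ u).1
  have hρ2 : ∀ u, ∀ v ∈ (ρ u).support, v = u ∨ wt w v < wt w u := fun u => (hρ u).2.1
  have hρ3 : ∀ u, monomial u (1 : F) - ρ u ∈ I := fun u => (hρ u).2.2
  set e1 : Fin n ≃ {x // x ∈ μ} := (finCongr hμcard.symm).trans μ.equivFin.symm with he1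
  set e2 : Fin n ≃ {x // x ∈ l} := (finCongr hcard.symm).trans l.equivFin.symm with he2
  set uu : Fin n → (Fin d →₀ ℕ) := fun i => (e1 i : Fin d →₀ ℕ) with huu
  set vv : Fin n → (Fin d →₀ ℕ) := fun j => (e2 j : Fin d →₀ ℕ) with hvv
  have huumem : ∀ i, uu i ∈ μ := fun i => (e1 i).2
  have huuinj : Function.Injective uu :=
    Subtype.val_injective.comp e1.injective
  set M : Matrix (Fin n) (Fin n) F := Matrix.of fun i j => coeff (vv j) (ρ (uu i)) with hM
  have hrows : LinearIndependent F (fun i => M i) := by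
    rw [Fintype.linearIndependent_iff]
    intro a ha i0
    set q : MvPolynomial (Fin d) F := ∑ i, a i • ρ (uu i) with hq
    have hq0 : q = 0 := by
      apply MvPolynomial.ext
      intro v'
      rw [hq]
      have hc : coeff v' (∑ i, a i • ρ (uu i)) = ∑ i, a i * coeff v' (ρ (uu i)) := by
        rw [MvPolynomial.coeff_sum]
        exact Finset.sum_congr rfl fun i _ => by rw [coeff_smul, smul_eq_mul]
      rw [hc, coeff_zero]
      by_cases hv' : v' ∈ l
      · have hj : vv (e2.symm ⟨v', hv'⟩) = v' := by
          simp [hvv]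
        have := congrFun ha (e2.symm ⟨v', hv'⟩)
        simp only [Finset.sum_apply, Pi.smul_apply, smul_eq_mul, Pi.zero_apply] at this
        rw [← this]
        exact Finset.sum_congr rfl fun i _ => by rw [hM]; simp [hj]
      · apply Finset.sum_eq_zero
        intro i _
        have : coeff v' (ρ (uu i)) = 0 := by
          by_contra hcne
          exact hv' (hρ1 (uu i) v' (mem_support_iff.mpr hcne))
        rw [this, mul_zero]
    set p : MvPolynomial (Fin d) F := ∑ i, a i • monomial (uu i) (1 : F) with hp
    have hp2 : p = ∑ i, a i • (monomial (uu i) (1 : F) - ρ (uu i)) := by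
      simp only [smul_sub, Finset.sum_sub_distrib]
      rw [← hp, ← hq, hq0, sub_zero]
    have hpI : p ∈ I := by
      rw [hp2]
      exact Submodule.sum_mem _ fun i _ => by
        rw [smul_eq_C_mul]; exact I.mul_mem_left _ (hρ3 (uu i))
    have hpspan : p ∈ Submodule.span F
        {p : MvPolynomial (Fin d) F | ∃ v ∈ μ, p = monomial v (1 : F)} :=
      Submodule.sum_mem _ fun i _ => Submodule.smul_mem _ _
        (Submodule.subset_span ⟨uu i, huumem i, rfl⟩)
    have hp0 : p = 0 := hbasic p hpspan hpI
    have hcoeff : coeff (uu i0) p = a i0 := by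
      rw [hp, MvPolynomial.coeff_sum]
      rw [Finset.sum_eq_single i0]
      · simp [coeff_monomial]
      · intro i _ hii0
        rw [coeff_smul, coeff_monomial, if_neg (fun hcon => hii0 (huuinj hcon)), smul_zero]
      · intro habs; exact absurd (Finset.mem_univ i0) habs
    rw [hp0, coeff_zero] at hcoeff
    exact hcoeff.symm
  have hMunit : IsUnit M := Matrix.linearIndependent_rows_iff_isUnit.mp hrows
  have hdet : M.det ≠ 0 := (Matrix.isUnit_iff_isUnit_det M).mp hMunit |>.ne_zero
  rw [Matrix.det_apply] at hdet
  obtain ⟨σ, -, hσ⟩ := Finset.exists_ne_zero_of_sum_ne_zero hdet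
  have hprod : ∏ j, M (σ j) j ≠ 0 := by
    intro h0
    apply hσ
    rw [h0, smul_zero]
  have hprodne : ∀ j, M (σ j) j ≠ 0 := fun j =>
    Finset.prod_ne_zero_iff.mp hprod j (Finset.mem_univ j)
  have hle : ∀ j, wt w (vv j) ≤ wt w (uu (σ j)) := by
    intro j
    have hvsup : vv j ∈ (ρ (uu (σ j))).support := mem_support_iff.mpr (hprodne j)
    rcases hρ2 _ _ hvsup with h | h
    · rw [h]
    · exact h.le
  have hex : ∃ j : Fin n, wt w (vv j) < wt w (uu (σ j)) := by
    by_contra hcon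
    push_neg at hcon
    have heq : ∀ j, vv j = uu (σ j) := fun j =>
      hgen _ _ (le_antisymm (hle j) (hcon j))
    have hsub : l ⊆ μ := by
      intro v hv
      have : vv (e2.symm ⟨v, hv⟩) = v := by simp [hvv]
      rw [← this, heq]
      exact huumem _
    have : l = μ := Finset.eq_of_subset_of_card_le hsub (by rw [hcard, hμcard])
    exact hne this.symm
  obtain ⟨j0, hj0⟩ := hex
  have hlt : ∑ j, wt w (vv j) < ∑ j, wt w (uu (σ j)) :=
    Finset.sum_lt_sum (fun j _ => hle j) ⟨j0, Finset.mem_univ _, hj0⟩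
  have el : ∑ v ∈ l, wt w v = ∑ j, wt w (vv j) := by
    rw [← Finset.sum_coe_sort l (wt w)]
    exact (Equiv.sum_comp e2 (fun x : {x // x ∈ l} => wt w x.1)).symm
  have eμ : ∑ u ∈ μ, wt w u = ∑ j, wt w (uu (σ j)) := by
    rw [← Finset.sum_coe_sort μ (wt w)]
    rw [Equiv.sum_comp σ (fun j => wt w (uu j))]
    exact (Equiv.sum_comp e1 (fun x : {x // x ∈ μ} => wt w x.1)).symm
  rw [el, eμ]
  exact hlt
lemma rdot_sumVec {d : ℕ} (w : Fin d → ℝ) (s : Finset (Fin d →₀ ℕ)) :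
    rdot w (sumVec s) = ∑ v ∈ s, wt w v := by
  unfold rdot sumVec wt
  simp_rw [Finset.mul_sum]
  exact Finset.sum_comm
lemma rdot_sum_smul {d : ℕ} (w : Fin d → ℝ) {ι : Type*} (t : Finset ι) (a : ι → ℝ)
    (z : ι → Fin d → ℝ) :
    rdot w (∑ i ∈ t, a i • z i) = ∑ i ∈ t, a i * rdot w (z i) := by
  calc rdot w (∑ i ∈ t, a i • z i) = ∑ j, w j * ∑ i ∈ t, a i * z i j := by
        unfold rdot
        apply Finset.sum_congr rfl
        intro j _
        congr 1
        simp [Finset.sum_apply]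
  _ = ∑ j, ∑ i ∈ t, w j * (a i * z i j) := by simp_rw [Finset.mul_sum]
  _ = ∑ i ∈ t, ∑ j, w j * (a i * z i j) := Finset.sum_comm
  _ = ∑ i ∈ t, a i * rdot w (z i) := by
        apply Finset.sum_congr rfl
        intro i _
        unfold rdot
        rw [Finset.mul_sum]
        apply Finset.sum_congr rfl
        intro j _
        ring
lemma basic_of_initial {d : ℕ} {F : Type*} [Field F] {I : Ideal (MvPolynomial (Fin d) F)}
    {w : Fin d → ℝ} {l : Finset (Fin d →₀ ℕ)} (hst : IsStaircaseF l)
    (hinit : staircaseIdeal F l = initialIdealW w I) : IsBasic I l := by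
  intro f hf hfI
  by_contra hf0
  obtain ⟨u, hus, hmax⟩ := f.support.exists_max_image (wt w)
    (Finset.nonempty_iff_ne_empty.mpr (fun h => hf0 (MvPolynomial.support_eq_empty.mp h)))
  have h1 : monomial u (1 : F) ∈ initialIdealW w I :=
    Ideal.subset_span ⟨f, hfI, hf0, u, hus, hmax, rfl⟩
  rw [← hinit, staircaseIdeal, staircase_gens] at h1
  obtain ⟨v, hv, hle⟩ := mem_ideal_span_monomial_image.mp h1 u (by simp [mem_support_iff])
  exact hv (hst v u (support_subset_of_mem_span hf u hus) hle)
lemma memV_of_staircase {d : ℕ} {l : Finset (Fin d →₀ ℕ)} (hst : IsStaircaseF l)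
    {v : Fin d →₀ ℕ} (hv : v ∈ l) : ∏ i, (v i + 1) ≤ l.card := by
  classical
  have h1 : Finset.Iic v ⊆ l := fun u hu => hst u v hv (Finset.mem_Iic.mp hu)
  have h2 : (Finset.Iic v).card = ∏ i, (v i + 1) := by
    rw [Finsupp.card_Iic]
    rw [Finset.prod_subset (Finset.subset_univ v.support)
      (fun i _ hi => by simp [Finsupp.notMem_support_iff.mp hi])]
    apply Finset.prod_congr rfl
    intro i _
    simp [Nat.card_Iic]
  calc ∏ i, (v i + 1) = (Finset.Iic v).card := h2.symm
  _ ≤ l.card := Finset.card_le_card h1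

/-- Let `I` have colength `n`, let `w ∈ ℝ₊^d` be generic, and let `l` be the initial
staircase of `I` under `w`. Then for every basic set `μ ≠ l` contained in `V_n^d` we have
`w·∑l < w·∑μ`; in particular `∑l` is the unique minimizer of `w` over the basis
polytope `B(I) = conv{∑μ : μ basic, μ ⊆ V_n^d}`. -/
theorem initial_staircase_unique_min {d n : ℕ} {F : Type*} [Field F]
    (I : Ideal (MvPolynomial (Fin d) F))
    (hlen : Module.finrank F (MvPolynomial (Fin d) F ⧸ I) = n)
    (w : Fin d → ℝ) (hw : ∀ i, 0 ≤ w i)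
    (hgen : ∀ u v : Fin d →₀ ℕ, wt w u = wt w v → u = v)
    (l : Finset (Fin d →₀ ℕ)) (hst : IsStaircaseF l) (hcard : l.card = n)
    (hinit : staircaseIdeal F l = initialIdealW w I) :
    (∀ μ : Finset (Fin d →₀ ℕ), μ.card = n → (∀ v ∈ μ, memV n v) → IsBasic I μ →
      μ ≠ l → rdot w (sumVec l) < rdot w (sumVec μ)) ∧
    sumVec l ∈ convexHull ℝ
      {p : Fin d → ℝ | ∃ μ : Finset (Fin d →₀ ℕ),
        μ.card = n ∧ (∀ v ∈ μ, memV n v) ∧ IsBasic I μ ∧ p = sumVec μ} ∧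
    (∀ x ∈ convexHull ℝ
      {p : Fin d → ℝ | ∃ μ : Finset (Fin d →₀ ℕ),
        μ.card = n ∧ (∀ v ∈ μ, memV n v) ∧ IsBasic I μ ∧ p = sumVec μ},
      x ≠ sumVec l → rdot w (sumVec l) < rdot w x) := by
  classical
  have hw0 : ∀ i, 0 < w i := wpos hw hgen
  have hbl : IsBasic I l := basic_of_initial hst hinit
  have hmemVl : ∀ v ∈ l, memV n v := by
    intro v hv
    unfold memV
    calc ∏ i, (v i + 1) ≤ l.card := memV_of_staircase hst hv
    _ = n := hcard
  set S : Set (Fin d → ℝ) := {p : Fin d → ℝ | ∃ μ : Finset (Fin d →₀ ℕ),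
      μ.card = n ∧ (∀ v ∈ μ, memV n v) ∧ IsBasic I μ ∧ p = sumVec μ} with hS
  have part1 : ∀ μ : Finset (Fin d →₀ ℕ), μ.card = n → (∀ v ∈ μ, memV n v) → IsBasic I μ →
      μ ≠ l → rdot w (sumVec l) < rdot w (sumVec μ) := by
    intro μ h1 h2 h3 h4
    rw [rdot_sumVec, rdot_sumVec]
    exact sum_wt_lt hw0 hgen hcard hinit h1 h3 h4
  have hlS : sumVec l ∈ S := ⟨l, hcard, hmemVl, hbl, rfl⟩
  refine ⟨part1, subset_convexHull ℝ S hlS, ?_⟩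
  have hSmin : ∀ p ∈ S, rdot w (sumVec l) ≤ rdot w p ∧
      (rdot w p ≤ rdot w (sumVec l) → p = sumVec l) := by
    rintro p ⟨μ, h1, h2, h3, rfl⟩
    by_cases hμl : μ = l
    · subst hμl; exact ⟨le_rfl, fun _ => rfl⟩
    · have hlt := part1 μ h1 h2 h3 hμl
      exact ⟨hlt.le, fun hle => absurd hle (not_le.mpr hlt)⟩
  intro x hx hxne
  rw [convexHull_eq] at hx
  obtain ⟨ι, t, a, z, ha0, ha1, hzS, hx⟩ := hx
  rw [Finset.centerMass_eq_of_sum_1 _ _ ha1] at hx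
  by_contra hcon
  push_neg at hcon
  have hxr : rdot w x = ∑ i ∈ t, a i * rdot w (z i) := by rw [← hx, rdot_sum_smul]
  set c := rdot w (sumVec l) with hc
  have h1 : ∀ i ∈ t, a i * c ≤ a i * rdot w (z i) := fun i hi =>
    mul_le_mul_of_nonneg_left (hSmin _ (hzS i hi)).1 (ha0 i hi)
  have h2 : ∑ i ∈ t, a i * c = c := by rw [← Finset.sum_mul, ha1, one_mul]
  have h3 : c ≤ rdot w x := by
    rw [hxr, ← h2]
    exact Finset.sum_le_sum h1
  have heq : rdot w x = c := le_antisymm hcon h3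
  have h4 : ∑ i ∈ t, a i * c = ∑ i ∈ t, a i * rdot w (z i) := by
    rw [h2, ← hxr, heq]
  have h5 := (Finset.sum_eq_sum_iff_of_le h1).mp h4
  have h6 : ∀ i ∈ t, a i • z i = a i • sumVec l := by
    intro i hi
    by_cases hai : a i = 0
    · simp [hai]
    · have hrz : rdot w (z i) = c := (mul_left_cancel₀ hai (h5 i hi)).symm
      rw [(hSmin _ (hzS i hi)).2 hrz.le]
  exact hxne (by rw [← hx, Finset.sum_congr rfl h6, ← Finset.sum_smul, ha1, one_smul])
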